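/- For the K×K covariance matrix Σ with Σ_{ii}=1, Σ_{1j}=Σ_{j1}=ρ for j≥2, and Σ_{ij}=ρ^{min(i,j)} for 2≤i≠j≤K, the MSE of arm i, defined as E_i = Σ_{j≠i} (1 − Σ_{ij}²), satisfies E_1 ≤ E_2 ≤ ... ≤ E_K, for any 0 ≤ ρ ≤ 1. -/
import Mathlib


/-- For the covariance matrix with unit variances and correlations
`ρ_{ij} = ρ^{min(i,j)}` for `i ≠ j` (arms indexed `1,…,K`), the MSEs
`E_i = Σ_{j≠i} (1 − ρ_{ij}²)` are nondecreasing in `i`, for `0 ≤ ρ ≤ 1`. -/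
theorem mse_ordered (K : ℕ) (hK : 2 ≤ K) (ρ : ℝ) (h0 : 0 ≤ ρ) (h1 : ρ ≤ 1)
    (E : ℕ → ℝ)
    (hE : ∀ i ∈ Finset.Icc 1 K,
      E i = ∑ j ∈ (Finset.Icc 1 K).erase i, (1 - (ρ ^ min i j) ^ 2)) :
    ∀ i ∈ Finset.Icc 1 K, ∀ j ∈ Finset.Icc 1 K, i ≤ j → E i ≤ E j := by
  intro i hi j hj hij
  rw [hE i hi, hE j hj, Finset.sum_erase_eq_sub hi, Finset.sum_erase_eq_sub hj,
      min_self, min_self]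
  have hterm : ∀ k ∈ Finset.Icc 1 K,
      (0:ℝ) ≤ (ρ ^ min i k) ^ 2 - (ρ ^ min j k) ^ 2 := by
    intro k _
    have hmm : min i k ≤ min j k := min_le_min hij le_rfl
    have : ρ ^ min j k ≤ ρ ^ min i k := pow_le_pow_of_le_one h0 h1 hmm
    have := pow_le_pow_left₀ (pow_nonneg h0 _) this 2
    linarith
  have hsum := Finset.single_le_sum hterm hj
  rw [min_eq_left hij, min_self] at hsum
  have hdiff : ∑ k ∈ Finset.Icc 1 K, ((ρ ^ min i k) ^ 2 - (ρ ^ min j k) ^ 2)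
      = ∑ k ∈ Finset.Icc 1 K, (1 - (ρ ^ min j k) ^ 2)
        - ∑ k ∈ Finset.Icc 1 K, (1 - (ρ ^ min i k) ^ 2) := by
    rw [← Finset.sum_sub_distrib]
    exact Finset.sum_congr rfl (fun k _ => by ring)
  rw [hdiff] at hsum
  linarith
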